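/- Let G = C_n(S) be a non-complete circulant graph with complement generating set S̄ = {1,…,⌊n/2⌋} \ S, and let Δ be the independence complex of G. Then Δ is pure of dimension 2 if and only if for every a with |a|_n ∈ S̄ the following hold: (1) there exists b with |b|_n ∈ S̄ and |b−a|_n ∈ S̄; and (2) for all b, c with b ≢ c (mod n), |b|_n, |c|_n, |b−a|_n, |c−a|_n ∈ S̄, one has |b−c|_n ∉ S̄. -/

import Mathlib

/-- The "reduced absolute value" |x|_n = min(x mod n, n - x mod n). -/
def redAbs (n : ℕ) (x : ZMod n) : ℕ := min x.val (n - x.val)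

/-- The circulant graph C_n(S). -/
def circulant (n : ℕ) (S : Finset ℕ) : SimpleGraph (ZMod n) :=
  SimpleGraph.fromRel (fun i j => redAbs n (j - i) ∈ S)

/-- `s` is an independent set of C_n(S). -/
def IsIndep {n : ℕ} (S : Finset ℕ) (s : Finset (ZMod n)) : Prop :=
  ∀ x ∈ s, ∀ y ∈ s, x ≠ y → ¬ (circulant n S).Adj x y

/-- `s` is a maximal independent set of C_n(S). -/
def IsMaxIndep {n : ℕ} (S : Finset ℕ) (s : Finset (ZMod n)) : Prop :=
  IsIndep S s ∧ ∀ t : Finset (ZMod n), IsIndep S t → s ⊆ t → t = s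

/-- The complement generating set S̄ = {1,…,⌊n/2⌋} \ S. -/
def Sbar (n : ℕ) (S : Finset ℕ) : Finset ℕ := Finset.Icc 1 (n / 2) \ S

lemma redAbs_neg (n : ℕ) [NeZero n] (x : ZMod n) : redAbs n (-x) = redAbs n x := by
  unfold redAbs
  rcases eq_or_ne x 0 with h | h
  · simp [h]
  · rw [ZMod.neg_val, if_neg h]
    have hv : x.val ≤ n := (ZMod.val_lt x).le
    rw [Nat.sub_sub_self hv, Nat.min_comm]

lemma sbar_ne_zero {n : ℕ} [NeZero n] {S : Finset ℕ} {x : ZMod n}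
    (h : redAbs n x ∈ Sbar n S) : x ≠ 0 := by
  rintro rfl
  simp [Sbar, redAbs] at h

lemma sbar_symm {n : ℕ} [NeZero n] {S : Finset ℕ} {x y : ZMod n}
    (h : redAbs n (x - y) ∈ Sbar n S) : redAbs n (y - x) ∈ Sbar n S := by
  rw [show y - x = -(x - y) by ring, redAbs_neg]; exact h

lemma redAbs_mem_Icc {n : ℕ} [NeZero n] {x : ZMod n} (hx : x ≠ 0) :
    redAbs n x ∈ Finset.Icc 1 (n / 2) := by
  have h1 : x.val ≠ 0 := fun h => hx ((ZMod.val_eq_zero x).1 h)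
  have h2 : x.val < n := ZMod.val_lt x
  unfold redAbs
  rw [Finset.mem_Icc]
  omega

lemma notAdj_of_mem {n : ℕ} [NeZero n] {S : Finset ℕ} {x y : ZMod n}
    (h : redAbs n (y - x) ∈ Sbar n S) : ¬ (circulant n S).Adj x y := by
  intro hadj
  rw [circulant, SimpleGraph.fromRel_adj] at hadj
  have hS : redAbs n (y - x) ∉ S := (Finset.mem_sdiff.1 h).2
  rcases hadj.2 with h' | h'
  · exact hS h'
  · rw [show x - y = -(y - x) by ring, redAbs_neg] at h'
    exact hS h'

lemma mem_of_notAdj {n : ℕ} [NeZero n] {S : Finset ℕ} {x y : ZMod n}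
    (hxy : x ≠ y) (h : ¬ (circulant n S).Adj x y) : redAbs n (y - x) ∈ Sbar n S := by
  rw [circulant, SimpleGraph.fromRel_adj] at h
  push_neg at h
  have h' := (h hxy).1
  exact Finset.mem_sdiff.2 ⟨redAbs_mem_Icc (sub_ne_zero.2 hxy.symm), h'⟩

lemma isIndep_of {n : ℕ} [NeZero n] {S : Finset ℕ} {s : Finset (ZMod n)}
    (h : ∀ x ∈ s, ∀ y ∈ s, x ≠ y → redAbs n (y - x) ∈ Sbar n S) : IsIndep S s :=
  fun x hx y hy hxy => notAdj_of_mem (h x hx y hy hxy)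

lemma exists_max {n : ℕ} [NeZero n] (S : Finset ℕ) (s : Finset (ZMod n))
    (hs : IsIndep S s) : ∃ t, s ⊆ t ∧ IsMaxIndep S t := by
  classical
  let F := Finset.univ.powerset.filter (fun t => IsIndep S t ∧ s ⊆ t)
  have hsF : s ∈ F := by simp [F, hs]
  obtain ⟨t, htF, hmax⟩ := F.exists_max_image Finset.card ⟨s, hsF⟩
  have htP : IsIndep S t ∧ s ⊆ t := (Finset.mem_filter.1 htF).2
  refine ⟨t, htP.2, htP.1, fun u hu hsub => ?_⟩
  have huF : u ∈ F := by
    simp only [F, Finset.mem_filter, Finset.mem_powerset]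
    exact ⟨Finset.subset_univ u, hu, htP.2.trans hsub⟩
  exact (Finset.eq_of_subset_of_card_le hsub (hmax u huF)).symm

theorem pure_two_dim_iff (n : ℕ) (hn : 0 < n) (S : Finset ℕ)
    (hS : S ⊆ Finset.Icc 1 (n / 2)) (hnc : (Sbar n S).Nonempty) :
    (∀ s : Finset (ZMod n), IsMaxIndep S s → s.card = 3) ↔
      (∀ a : ZMod n, redAbs n a ∈ Sbar n S →
        (∃ b : ZMod n, redAbs n b ∈ Sbar n S ∧ redAbs n (b - a) ∈ Sbar n S) ∧
        (∀ b c : ZMod n, b ≠ c → redAbs n b ∈ Sbar n S → redAbs n c ∈ Sbar n S →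
          redAbs n (b - a) ∈ Sbar n S → redAbs n (c - a) ∈ Sbar n S →
          redAbs n (b - c) ∉ Sbar n S)) := by
  haveI : NeZero n := ⟨hn.ne'⟩
  classical
  constructor
  · -- LHS → RHS
    intro H a ha
    have ha0 : a ≠ 0 := sbar_ne_zero ha
    constructor
    · -- existence
      have hind : IsIndep S {0, a} := by
        apply isIndep_of
        intro x hx y hy hxy
        simp only [Finset.mem_insert, Finset.mem_singleton] at hx hy
        rcases hx with h1 | h1 <;> rcases hy with h2 | h2 <;>
            rw [h1] at hxy ⊢ <;> rw [h2] at hxy ⊢ <;>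
          first
            | exact absurd rfl hxy
            | simpa using ha
            | (rw [zero_sub, redAbs_neg]; exact ha)
      obtain ⟨t, hsub, htind, htmax⟩ := exists_max S _ hind
      have hcard := H t ⟨htind, htmax⟩
      have h0t : (0 : ZMod n) ∈ t := hsub (by simp)
      have hat : a ∈ t := hsub (by simp)
      obtain ⟨z, hzt, hz⟩ : ∃ z ∈ t, z ∉ ({0, a} : Finset (ZMod n)) := by
        by_contra hcon
        push_neg at hcon
        have : t.card ≤ ({0, a} : Finset (ZMod n)).card :=
          Finset.card_le_card hcon
        have : ({0, a} : Finset (ZMod n)).card ≤ 2 := Finset.card_insert_le _ _ |>.trans (by simp)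
        omega
      simp only [Finset.mem_insert, Finset.mem_singleton, not_or] at hz
      refine ⟨z, ?_, ?_⟩
      · have := mem_of_notAdj (Ne.symm hz.1) (htind 0 h0t z hzt (Ne.symm hz.1))
        simpa using this
      · exact mem_of_notAdj (Ne.symm hz.2) (htind a hat z hzt (Ne.symm hz.2))
    · -- uniqueness
      intro b c hbc hb hc hba hca hbcS
      have hb0 : b ≠ 0 := sbar_ne_zero hb
      have hc0 : c ≠ 0 := sbar_ne_zero hc
      have hab : a ≠ b := fun h => sbar_ne_zero hba (by rw [h, sub_self])
      have hac : a ≠ c := fun h => sbar_ne_zero hca (by rw [h, sub_self])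
      have hind : IsIndep S {0, a, b, c} := by
        apply isIndep_of
        intro x hx y hy hxy
        simp only [Finset.mem_insert, Finset.mem_singleton] at hx hy
        rcases hx with h1 | h1 | h1 | h1 <;> rcases hy with h2 | h2 | h2 | h2 <;>
            rw [h1] at hxy ⊢ <;> rw [h2] at hxy ⊢ <;>
          first
            | exact absurd rfl hxy
            | assumption
            | simpa using ha
            | simpa using hb
            | simpa using hc
            | (rw [zero_sub, redAbs_neg]; assumption)
            | exact sbar_symm hba
            | exact sbar_symm hca
            | exact sbar_symm hbcS
      obtain ⟨t, hsub, htind, htmax⟩ := exists_max S _ hind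
      have hcard := H t ⟨htind, htmax⟩
      have h4 : ({0, a, b, c} : Finset (ZMod n)).card = 4 := by
        rw [Finset.card_insert_of_notMem (by simp [ha0.symm, hb0.symm, hc0.symm]),
          Finset.card_insert_of_notMem (by simp [hab, hac]),
          Finset.card_insert_of_notMem (by simp [hbc]),
          Finset.card_singleton]
      have := Finset.card_le_card hsub
      omega
  · -- RHS → LHS
    intro H s hs
    obtain ⟨hind, hmax⟩ := hs
    obtain ⟨k, hk⟩ := hnc
    have hkIcc := (Finset.mem_sdiff.1 hk).1
    rw [Finset.mem_Icc] at hkIcc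
    have hn2 : 2 ≤ n := by omega
    have hkv : ((k : ZMod n)).val = k := ZMod.val_cast_of_lt (by omega)
    have hkr : redAbs n (k : ZMod n) = k := by
      unfold redAbs; rw [hkv]; omega
    have hkS : redAbs n (k : ZMod n) ∈ Sbar n S := by rw [hkr]; exact hk
    have hkne : (k : ZMod n) ≠ 0 := sbar_ne_zero hkS
    -- s is nonempty
    have hne : s.Nonempty := by
      rw [Finset.nonempty_iff_ne_empty]
      rintro rfl
      have hind0 : IsIndep S {(0 : ZMod n)} := by
        intro x hx y hy hxy
        simp only [Finset.mem_singleton] at hx hy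
        exact absurd (hx.trans hy.symm) hxy
      have := hmax {(0 : ZMod n)} hind0 (Finset.empty_subset _)
      simp at this
    obtain ⟨x, hx⟩ := hne
    -- card ≥ 2
    have h2le : 2 ≤ s.card := by
      by_contra hcon
      push_neg at hcon
      have h1 : s.card = 1 := by
        have := Finset.card_pos.2 ⟨x, hx⟩; omega
      obtain ⟨w, hw⟩ := Finset.card_eq_one.1 h1
      subst hw
      simp only [Finset.mem_singleton] at hx
      subst hx
      have hindt : IsIndep S {x, x + k} := by
        apply isIndep_of
        intro u hu v hv huv
        simp only [Finset.mem_insert, Finset.mem_singleton] at hu hv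
        rcases hu with h1 | h1 <;> rcases hv with h2 | h2 <;>
            rw [h1] at huv ⊢ <;> rw [h2] at huv ⊢ <;>
          first
            | exact absurd rfl huv
            | (rw [add_sub_cancel_left]; exact hkS)
            | (rw [sub_add_cancel_left, redAbs_neg]; exact hkS)
      have := hmax {x, x + k} hindt (by simp)
      have hxk : x + k ∈ ({x} : Finset (ZMod n)) := this ▸ (by simp)
      simp only [Finset.mem_singleton] at hxk
      exact hkne (by linear_combination hxk)
    -- get two distinct elements
    obtain ⟨y, hy, x', hx', hyx⟩ := Finset.one_lt_card.1 (by omega : 1 < s.card)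
    -- card ≥ 3
    have ha : redAbs n (x' - y) ∈ Sbar n S :=
      mem_of_notAdj hyx (hind y hy x' hx' hyx)
    obtain ⟨⟨b, hb, hba⟩, _⟩ := H (x' - y) ha
    have h3le : 3 ≤ s.card := by
      by_contra hcon
      push_neg at hcon
      have h2 : s.card = 2 := by omega
      have hsub2 : ({y, x'} : Finset (ZMod n)) ⊆ s := by
        intro u hu
        simp only [Finset.mem_insert, Finset.mem_singleton] at hu
        rcases hu with rfl | rfl <;> assumption
      have hcard2 : ({y, x'} : Finset (ZMod n)).card = 2 := by
        rw [Finset.card_insert_of_notMem (by simp [hyx]), Finset.card_singleton]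
      have hseq : ({y, x'} : Finset (ZMod n)) = s :=
        Finset.eq_of_subset_of_card_le hsub2 (by omega)
      have hb0 : b ≠ 0 := sbar_ne_zero hb
      have hbz : b ≠ x' - y := fun h => sbar_ne_zero hba (by rw [h, sub_self])
      have hindt : IsIndep S {y, x', y + b} := by
        apply isIndep_of
        intro u hu v hv huv
        simp only [Finset.mem_insert, Finset.mem_singleton] at hu hv
        rcases hu with h1 | h1 | h1 <;> rcases hv with h2 | h2 | h2 <;>
            rw [h1] at huv ⊢ <;> rw [h2] at huv ⊢
        · exact absurd rfl huv
        · exact ha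
        · rw [add_sub_cancel_left]; exact hb
        · exact sbar_symm ha
        · exact absurd rfl huv
        · rw [show y + b - x' = b - (x' - y) by ring]; exact hba
        · rw [sub_add_cancel_left, redAbs_neg]; exact hb
        · rw [show x' - (y + b) = -(b - (x' - y)) by ring, redAbs_neg]; exact hba
        · exact absurd rfl huv
      have := hmax _ hindt (by rw [← hseq]; intro u hu; simp only [Finset.mem_insert,
        Finset.mem_singleton] at hu ⊢; tauto)
      have hmem : y + b ∈ s := by
        rw [← this]; simp
      rw [← hseq] at hmem
      simp only [Finset.mem_insert, Finset.mem_singleton] at hmem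
      rcases hmem with h | h
      · exact hb0 (by linear_combination h)
      · exact hbz (by linear_combination h)
    -- card ≤ 3
    have h3ge : s.card ≤ 3 := by
      by_contra hcon
      push_neg at hcon
      obtain ⟨t, hts, ht4⟩ := Finset.exists_subset_card_eq (s := s) (n := 4) (by omega)
      obtain ⟨p, hp⟩ := Finset.card_pos.1 (by omega : 0 < t.card)
      have ht3 : (t.erase p).card = 3 := by
        rw [Finset.card_erase_of_mem hp, ht4]
      obtain ⟨q, r, w, hqr, hqw, hrw, herase⟩ := Finset.card_eq_three.1 ht3
      have hq : q ∈ t.erase p := by rw [herase]; simp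
      have hr : r ∈ t.erase p := by rw [herase]; simp
      have hw : w ∈ t.erase p := by rw [herase]; simp
      have hqp := Finset.ne_of_mem_erase hq
      have hrp := Finset.ne_of_mem_erase hr
      have hwp := Finset.ne_of_mem_erase hw
      have hps : p ∈ s := hts hp
      have hqs : q ∈ s := hts (Finset.mem_of_mem_erase hq)
      have hrs : r ∈ s := hts (Finset.mem_of_mem_erase hr)
      have hws : w ∈ s := hts (Finset.mem_of_mem_erase hw)
      have m1 : redAbs n (q - p) ∈ Sbar n S :=
        mem_of_notAdj hqp.symm (hind p hps q hqs hqp.symm)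
      have m2 : redAbs n (r - p) ∈ Sbar n S :=
        mem_of_notAdj hrp.symm (hind p hps r hrs hrp.symm)
      have m3 : redAbs n (w - p) ∈ Sbar n S :=
        mem_of_notAdj hwp.symm (hind p hps w hws hwp.symm)
      have m4 : redAbs n (r - q) ∈ Sbar n S :=
        mem_of_notAdj hqr (hind q hqs r hrs hqr)
      have m5 : redAbs n (w - q) ∈ Sbar n S :=
        mem_of_notAdj hqw (hind q hqs w hws hqw)
      have m6 : redAbs n (w - r) ∈ Sbar n S :=
        mem_of_notAdj hrw (hind r hrs w hws hrw)
      obtain ⟨_, hu⟩ := H (q - p) m1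
      refine hu (r - p) (w - p) (fun h => hrw (by linear_combination h)) m2 m3 ?_ ?_ ?_
      · rw [show r - p - (q - p) = r - q by ring]; exact m4
      · rw [show w - p - (q - p) = w - q by ring]; exact m5
      · rw [show r - p - (w - p) = -(w - r) by ring, redAbs_neg]; exact m6
    omega
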